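/- Let 0 < γ1 < 1 and let E = (xE, yE), P1 = (x1, y1) ∈ ℝ² with E ≠ P1 and yE > 0. Then the Apollonius circle C = {z ∈ ℝ² : dist(z, E) = γ1·dist(z, P1)} meets the x-axis {(x, 0) : x ∈ ℝ} in exactly one point if and only if (1 − γ1²)·yE² = γ1²(xE − x1)² + γ1²(1 − γ1²)·y1² (equivalently, γ1²(x1² + (1 − γ1²)y1²) + γ1²xE² − (1 − γ1²)yE² − 2γ1²x1xE = 0), and in that case the unique intersection (tangency) point is ((xE − γ1²x1)/(1 − γ1²), 0). -/

import Mathlib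

noncomputable section

def pt (x y : ℝ) : EuclideanSpace ℝ (Fin 2) := (WithLp.equiv 2 (Fin 2 → ℝ)).symm ![x, y]

lemma pt_app0 (x y : ℝ) : pt x y 0 = x := rfl
lemma pt_app1 (x y : ℝ) : pt x y 1 = y := rfl

lemma eq_pt (z : EuclideanSpace ℝ (Fin 2)) : z = pt (z 0) (z 1) := by
  ext i; fin_cases i <;> rfl

lemma dist_pt (z : EuclideanSpace ℝ (Fin 2)) (c d : ℝ) :
    dist z (pt c d) = Real.sqrt ((z 0 - c)^2 + (z 1 - d)^2) := by
  rw [EuclideanSpace.dist_eq, Fin.sum_univ_two, pt_app0, pt_app1]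
  simp [Real.dist_eq, sq_abs]

lemma key (γ1 c d c' d' : ℝ) (h0 : 0 ≤ γ1) (z : EuclideanSpace ℝ (Fin 2)) :
    dist z (pt c d) = γ1 * dist z (pt c' d') ↔
    (z 0 - c)^2 + (z 1 - d)^2 = γ1^2 * ((z 0 - c')^2 + (z 1 - d')^2) := by
  rw [dist_pt, dist_pt,
    show γ1 * Real.sqrt ((z 0 - c')^2 + (z 1 - d')^2)
       = Real.sqrt (γ1^2 * ((z 0 - c')^2 + (z 1 - d')^2)) by
      rw [Real.sqrt_mul (sq_nonneg _), Real.sqrt_sq h0],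
    Real.sqrt_inj (by positivity) (by positivity)]

/-- For `0 < γ1 < 1`, `E = (xE,yE) ≠ P1 = (x1,y1)` with `yE > 0`, the Apollonius circle
`{z : dist(z,E) = γ1·dist(z,P1)}` meets the x-axis in exactly one point iff
`(1 − γ1²)yE² = γ1²(xE − x1)² + γ1²(1 − γ1²)y1²` (equivalently,
`γ1²(x1² + (1 − γ1²)y1²) + γ1²xE² − (1 − γ1²)yE² − 2γ1²x1xE = 0`), and in that case the
unique tangency point is `((xE − γ1²x1)/(1 − γ1²), 0)`. -/
theorem apollonius_tangent_to_axis (γ1 xE yE x1 y1 : ℝ) (h0 : 0 < γ1) (h1 : γ1 < 1)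
    (hne : pt xE yE ≠ pt x1 y1) (hyE : 0 < yE) :
    ((∃! z : EuclideanSpace ℝ (Fin 2),
        dist z (pt xE yE) = γ1 * dist z (pt x1 y1) ∧ z 1 = 0) ↔
      (1 - γ1 ^ 2) * yE ^ 2 =
        γ1 ^ 2 * (xE - x1) ^ 2 + γ1 ^ 2 * (1 - γ1 ^ 2) * y1 ^ 2) ∧
    ((1 - γ1 ^ 2) * yE ^ 2 =
        γ1 ^ 2 * (xE - x1) ^ 2 + γ1 ^ 2 * (1 - γ1 ^ 2) * y1 ^ 2 ↔
      γ1 ^ 2 * (x1 ^ 2 + (1 - γ1 ^ 2) * y1 ^ 2) + γ1 ^ 2 * xE ^ 2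
        - (1 - γ1 ^ 2) * yE ^ 2 - 2 * γ1 ^ 2 * x1 * xE = 0) ∧
    ((1 - γ1 ^ 2) * yE ^ 2 =
        γ1 ^ 2 * (xE - x1) ^ 2 + γ1 ^ 2 * (1 - γ1 ^ 2) * y1 ^ 2 →
      ∀ z : EuclideanSpace ℝ (Fin 2),
        dist z (pt xE yE) = γ1 * dist z (pt x1 y1) ∧ z 1 = 0 →
          z = pt ((xE - γ1 ^ 2 * x1) / (1 - γ1 ^ 2)) 0) := by
  have ha : (0:ℝ) < 1 - γ1 ^ 2 := by nlinarith
  -- quarter-discriminant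
  set D : ℝ := γ1^2*(xE-x1)^2 + γ1^2*(1-γ1^2)*y1^2 - (1-γ1^2)*yE^2 with hDdef
  -- characterization of points on circle ∩ axis
  have main : ∀ z : EuclideanSpace ℝ (Fin 2),
      (dist z (pt xE yE) = γ1 * dist z (pt x1 y1) ∧ z 1 = 0) ↔
      (((1 - γ1^2) * z 0 - (xE - γ1^2 * x1))^2 = D ∧ z 1 = 0) := by
    intro z
    rw [key γ1 xE yE x1 y1 h0.le z]
    constructor
    · rintro ⟨hd, h1'⟩
      rw [h1'] at hd
      refine ⟨?_, h1'⟩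
      linear_combination (1 - γ1^2) * hd
    · rintro ⟨hd, h1'⟩
      refine ⟨?_, h1'⟩
      rw [h1']
      have h2 : (1 - γ1^2) * ((z 0 - xE)^2 + (0 - yE)^2)
          = (1 - γ1^2) * (γ1^2 * ((z 0 - x1)^2 + (0 - y1)^2)) := by
        linear_combination hd
      exact mul_left_cancel₀ ha.ne' h2
  have hpt0 : ∀ x : ℝ, (pt x 0) 0 = x := fun x => rfl
  have hpt1 : ∀ x : ℝ, (pt x 0) 1 = 0 := fun x => rfl
  -- condition ↔ D = 0
  have hcond : ((1 - γ1 ^ 2) * yE ^ 2 =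
      γ1 ^ 2 * (xE - x1) ^ 2 + γ1 ^ 2 * (1 - γ1 ^ 2) * y1 ^ 2) ↔ D = 0 := by
    rw [hDdef]; constructor <;> intro h <;> linarith
  -- uniqueness under D = 0
  have huniq : D = 0 → ∀ z : EuclideanSpace ℝ (Fin 2),
      dist z (pt xE yE) = γ1 * dist z (pt x1 y1) ∧ z 1 = 0 →
        z = pt ((xE - γ1 ^ 2 * x1) / (1 - γ1 ^ 2)) 0 := by
    intro hD z hz
    rw [main] at hz
    obtain ⟨hq, h1'⟩ := hz
    rw [hD] at hq
    have hx : z 0 = (xE - γ1 ^ 2 * x1) / (1 - γ1 ^ 2) := by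
      have := pow_eq_zero_iff (n := 2) (by norm_num) |>.mp hq
      field_simp
      linarith
    rw [eq_pt z, h1', hx]
  refine ⟨?_, ?_, fun h => huniq (hcond.mp h)⟩
  · rw [hcond]
    constructor
    · rintro ⟨z, hz, hu⟩
      rcases lt_trichotomy D 0 with hD | hD | hD
      · exfalso
        rw [main] at hz
        nlinarith [hz.1, sq_nonneg ((1 - γ1^2) * z 0 - (xE - γ1^2 * x1))]
      · exact hD
      · exfalso
        set s := Real.sqrt D with hs
        have hs0 : 0 < s := Real.sqrt_pos.mpr hD
        have hss : s^2 = D := Real.sq_sqrt hD.le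
        have hz1 : pt (((xE - γ1^2 * x1) + s) / (1 - γ1^2)) 0 = z := by
          apply hu
          rw [main]
          refine ⟨?_, hpt1 _⟩
          rw [hpt0]
          rw [show (1 - γ1^2) * (((xE - γ1^2 * x1) + s) / (1 - γ1^2)) - (xE - γ1^2 * x1) = s by
            field_simp; ring]
          exact hss
        have hz2 : pt (((xE - γ1^2 * x1) - s) / (1 - γ1^2)) 0 = z := by
          apply hu
          rw [main]
          refine ⟨?_, hpt1 _⟩
          rw [hpt0]
          rw [show (1 - γ1^2) * (((xE - γ1^2 * x1) - s) / (1 - γ1^2)) - (xE - γ1^2 * x1) = -s by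
            field_simp; ring]
          rw [neg_pow, hss]; ring
        have : (pt (((xE - γ1^2 * x1) + s) / (1 - γ1^2)) 0) 0 = (pt (((xE - γ1^2 * x1) - s) / (1 - γ1^2)) 0) 0 :=
          congrArg (fun w : EuclideanSpace ℝ (Fin 2) => w 0) (hz1.trans hz2.symm)
        rw [hpt0, hpt0] at this
        have h2 := congrArg (fun t => t * (1 - γ1^2)) this
        simp only [div_mul_cancel₀ _ ha.ne'] at h2
        linarith
    · intro hD
      refine ⟨pt ((xE - γ1^2 * x1) / (1 - γ1^2)) 0, ?_, fun z hz => huniq hD z hz⟩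
      show dist _ (pt xE yE) = γ1 * dist _ (pt x1 y1) ∧
        (pt ((xE - γ1^2 * x1) / (1 - γ1^2)) 0) 1 = 0
      rw [main]
      refine ⟨?_, hpt1 _⟩
      rw [hpt0, show (1 - γ1^2) * ((xE - γ1^2 * x1) / (1 - γ1^2)) - (xE - γ1^2 * x1) = 0 by
        field_simp; ring, hD]
      norm_num
  · constructor <;> intro h <;> linear_combination -h
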